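/- Assume a·‖κ‖_{L^∞(ℝ)} < 1 and additionally that R′ is (globally) essentially bounded on ℝ. Then there exist constants 0 < c ≤ C such that for every ψ ∈ C_c^∞(ℝ×ω): c·( ∫_{ℝ×ω} |∇ψ|^p + ∫_{ℝ×ω} |ψ|^p ) ≤ Q[ψ] + ‖ψ‖^p ≤ C·( ∫_{ℝ×ω} |∇ψ|^p + ∫_{ℝ×ω} |ψ|^p ); that is, the curvilinear Sobolev norm (Q[ψ] + ‖ψ‖^p)^{1/p} is equivalent to the usual W^{1,p}(ℝ×ω) norm, so W_0^{1,p}(Ω_0,g) = W_0^{1,p}(Ω_0). -/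

import Mathlib

open MeasureTheory Set Filter Matrix

noncomputable section

abbrev E (m : ℕ) := EuclideanSpace ℝ (Fin m)

def lam1 (p : ℝ) {m : ℕ} (Ω : Set (E m)) : ℝ :=
  sInf {r : ℝ | ∃ u : E m → ℝ, ContDiff ℝ (⊤ : ℕ∞) u ∧ HasCompactSupport u ∧
    tsupport u ⊆ Ω ∧ u ≠ 0 ∧
    r = (∫ x in Ω, ‖fderiv ℝ u x‖ ^ p) / (∫ x in Ω, |u x| ^ p)}

def tube {m : ℕ} (ω : Set (E m)) : Set (ℝ × E m) := Set.univ ×ˢ ω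

def dS {m : ℕ} (ψ : ℝ × E m → ℝ) (x : ℝ × E m) : ℝ := fderiv ℝ ψ x (1, 0)

def dT {m : ℕ} (ψ : ℝ × E m → ℝ) (x : ℝ × E m) (μ : Fin m) : ℝ :=
  fderiv ℝ ψ x (0, EuclideanSpace.single μ 1)

def Rd {m : ℕ} (R : ℝ → Matrix (Fin m) (Fin m) ℝ) (s : ℝ) : Matrix (Fin m) (Fin m) ℝ :=
  fun i j => deriv (fun s' => R s' i j) s

def Fvec {m : ℕ} (R : ℝ → Matrix (Fin m) (Fin m) ℝ) (s : ℝ) (t : E m) (μ : Fin m) : ℝ :=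
  ∑ α, ∑ β, t α * Rd R s α β * R s μ β

def fJac {m : ℕ} (R : ℝ → Matrix (Fin m) (Fin m) ℝ) (k : ℝ → E m) (s : ℝ) (t : E m) : ℝ :=
  1 - ∑ α, ∑ β, t α * R s α β * k s β

def Qf (p : ℝ) {m : ℕ} (f : ℝ → E m → ℝ) (F : ℝ → E m → Fin m → ℝ)
    (S : Set (ℝ × E m)) (ψ : ℝ × E m → ℝ) : ℝ :=
  ∫ x in S, (|(dS ψ x - ∑ μ, F x.1 x.2 μ * dT ψ x μ) / f x.1 x.2| ^ 2
      + ∑ μ, dT ψ x μ ^ 2) ^ (p / 2) * f x.1 x.2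

def Nf (p : ℝ) {m : ℕ} (f : ℝ → E m → ℝ) (S : Set (ℝ × E m)) (ψ : ℝ × E m → ℝ) : ℝ :=
  ∫ x in S, |ψ x| ^ p * f x.1 x.2

def lamT (p : ℝ) {m : ℕ} (ω : Set (E m)) (f : ℝ → E m → ℝ) (F : ℝ → E m → Fin m → ℝ) : ℝ :=
  sInf {r : ℝ | ∃ ψ : ℝ × E m → ℝ, ContDiff ℝ (⊤ : ℕ∞) ψ ∧ HasCompactSupport ψ ∧
    tsupport ψ ⊆ tube ω ∧ ψ ≠ 0 ∧
    r = Qf p f F (tube ω) ψ / Nf p f (tube ω) ψ}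

def lamInfT (p : ℝ) {m : ℕ} (ω : Set (E m)) (f : ℝ → E m → ℝ) (F : ℝ → E m → Fin m → ℝ) : ℝ :=
  sSup {r : ℝ | ∃ K : Set (ℝ × E m), IsCompact K ∧ K ⊆ tube ω ∧
    r = sInf {q : ℝ | ∃ ψ : ℝ × E m → ℝ, ContDiff ℝ (⊤ : ℕ∞) ψ ∧ HasCompactSupport ψ ∧
      tsupport ψ ⊆ tube ω \ K ∧ ψ ≠ 0 ∧
      q = Qf p f F (tube ω) ψ / Nf p f (tube ω) ψ}}


/-- `|∇u|^p` (Euclidean norm of the full gradient, to the power `p`) on `ℝ × ℝ^m`. -/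
def gradP (p : ℝ) {m : ℕ} (u : ℝ × E m → ℝ) (x : ℝ × E m) : ℝ :=
  (dS u x ^ 2 + ∑ μ, dT u x μ ^ 2) ^ (p / 2)



lemma euclid_sq_norm {m : ℕ} (t : E m) : ‖t‖^2 = ∑ i, t i ^ 2 := by
  rw [EuclideanSpace.norm_eq, Real.sq_sqrt (by positivity)]
  simp [Real.norm_eq_abs, sq_abs]

lemma coord_abs_le_norm {m : ℕ} (t : E m) (i : Fin m) : |t i| ≤ ‖t‖ := by
  have h1 : (t i)^2 ≤ ‖t‖^2 := by
    rw [euclid_sq_norm]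
    exact Finset.single_le_sum (f := fun j => t j ^ 2) (fun j _ => sq_nonneg _) (Finset.mem_univ i)
  nlinarith [abs_nonneg (t i), norm_nonneg t, sq_abs (t i)]

lemma orth_sum_sq {m : ℕ} {R : Matrix (Fin m) (Fin m) ℝ} (h : Rᵀ * R = 1) (v : Fin m → ℝ) :
    ∑ α, (∑ β, R α β * v β)^2 = ∑ β, v β ^ 2 := by
  have key : ∀ β γ, ∑ α, R α β * R α γ = (1 : Matrix (Fin m) (Fin m) ℝ) β γ := by
    intro β γ
    rw [← h, Matrix.mul_apply]
    simp [Matrix.transpose_apply]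
  calc ∑ α, (∑ β, R α β * v β)^2
      = ∑ α, ∑ β, ∑ γ, (R α β * v β) * (R α γ * v γ) := by
        simp_rw [sq, Finset.sum_mul_sum]
    _ = ∑ β, ∑ γ, ∑ α, (R α β * v β) * (R α γ * v γ) := by
        rw [Finset.sum_comm]
        exact Finset.sum_congr rfl fun β _ => Finset.sum_comm
    _ = ∑ β, ∑ γ, (∑ α, R α β * R α γ) * (v β * v γ) := by
        refine Finset.sum_congr rfl fun β _ => Finset.sum_congr rfl fun γ _ => ?_
        rw [Finset.sum_mul]
        exact Finset.sum_congr rfl fun α _ => by ring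
    _ = ∑ β, v β ^ 2 := by
        simp_rw [key, Matrix.one_apply]
        simp [Finset.sum_ite_eq, sq]

lemma integrableOn_of_bdd_cs {m : ℕ} {g : ℝ × E m → ℝ} {S : Set (ℝ × E m)}
    (hS : MeasurableSet S) (hg : AEStronglyMeasurable g volume)
    {Kc : Set (ℝ × E m)} (hKc : IsCompact Kc) (hsupp : Function.support g ⊆ Kc)
    {M : ℝ} (hM : ∀ᵐ x ∂(volume.restrict S), |g x| ≤ M) : IntegrableOn g S := by
  have hKm : MeasurableSet Kc := hKc.isClosed.measurableSet
  have h1 : IntegrableOn g (S ∩ Kc) := by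
    refine Measure.integrableOn_of_bounded (M := M) ?_ ?_ ?_
    · exact ne_of_lt (lt_of_le_of_lt (measure_mono inter_subset_right) hKc.measure_lt_top)
    · exact hg
    · filter_upwards [ae_mono (Measure.restrict_mono inter_subset_left le_rfl) hM] with x hx
      simpa [Real.norm_eq_abs] using hx
  have h2 : IntegrableOn g (S \ Kc) := by
    have heq : EqOn g 0 (S \ Kc) := fun x hx => by
      by_contra hne
      exact hx.2 (hsupp hne)
    exact (integrableOn_congr_fun heq (hS.diff hKm)).mpr (integrableOn_zero)
  have := h1.union h2
  rwa [Set.inter_union_diff] at this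

lemma ptwise_low {m : ℕ} {p : ℝ} (hp : 1 ≤ p) {B fL fU : ℝ} (hB : 0 ≤ B) (hfL : 0 < fL)
    {C₃ : ℝ} (hC3a : 2 * fU ^ 2 ≤ C₃) (hC3b : 2 * (m : ℝ) * B ^ 2 + 1 ≤ C₃)
    {c : ℝ} (hc : c ≤ fL / C₃ ^ (p / 2)) (hc0 : 0 ≤ c)
    (u : ℝ) (v F : Fin m → ℝ) (hF : ∀ μ, |F μ| ≤ B)
    {f : ℝ} (hf1 : fL ≤ f) (hf2 : f ≤ fU) :
    c * (u ^ 2 + ∑ μ, v μ ^ 2) ^ (p / 2)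
      ≤ (|(u - ∑ μ, F μ * v μ) / f| ^ 2 + ∑ μ, v μ ^ 2) ^ (p / 2) * f := by
  have hC30 : (0:ℝ) < C₃ := lt_of_lt_of_le (by positivity) hC3b
  set S := ∑ μ, v μ ^ 2 with hSdef
  set w := ∑ μ, F μ * v μ with hwdef
  have hS0 : 0 ≤ S := hSdef ▸ Finset.sum_nonneg fun μ _ => sq_nonneg _
  have hf0 : 0 < f := lt_of_lt_of_le hfL hf1
  set Q := ((u - w) / f) ^ 2 with hQdef
  clear_value S w Q
  have hQ0 : 0 ≤ Q := hQdef ▸ sq_nonneg _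
  have hw2 : w ^ 2 ≤ (m : ℝ) * B ^ 2 * S := by
    have h1 : w ^ 2 ≤ (∑ μ, F μ ^ 2) * S := by
      rw [hwdef, hSdef]; exact Finset.sum_mul_sq_le_sq_mul_sq _ _ _
    have h2 : (∑ μ, F μ ^ 2) ≤ (m : ℝ) * B ^ 2 := by
      calc (∑ μ, F μ ^ 2) ≤ ∑ _μ : Fin m, B ^ 2 :=
            Finset.sum_le_sum fun μ _ => by
              have := hF μ; nlinarith [abs_nonneg (F μ), sq_abs (F μ)]
        _ = (m : ℝ) * B ^ 2 := by simp [Finset.sum_const, Finset.card_univ]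
    nlinarith
  have hfsq : f ^ 2 ≤ fU ^ 2 := by nlinarith
  have huw : (u - w) ^ 2 = f ^ 2 * Q := by
    rw [hQdef]; field_simp
  have hkey : u ^ 2 + S ≤ C₃ * (Q + S) := by
    have hu2 : u ^ 2 ≤ 2 * (u - w) ^ 2 + 2 * w ^ 2 := by nlinarith [sq_nonneg (u - 2 * w)]
    nlinarith [mul_nonneg hQ0 (sub_nonneg.mpr hC3a), mul_nonneg hS0 (sub_nonneg.mpr hC3b),
      mul_le_mul_of_nonneg_right hfsq hQ0]
  have hX0 : (0:ℝ) ≤ u ^ 2 + S := add_nonneg (sq_nonneg u) hS0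
  have hp2 : (0:ℝ) ≤ p / 2 := by linarith
  have h2 : (u ^ 2 + S) ^ (p / 2) ≤ C₃ ^ (p / 2) * (Q + S) ^ (p / 2) := by
    rw [← Real.mul_rpow hC30.le (add_nonneg hQ0 hS0)]
    exact Real.rpow_le_rpow hX0 hkey hp2
  have hC3p : (0:ℝ) < C₃ ^ (p / 2) := Real.rpow_pos_of_pos hC30 _
  have habs : |(u - w) / f| ^ 2 = Q := by rw [sq_abs, hQdef]
  rw [habs]
  calc c * (u ^ 2 + S) ^ (p / 2)
      ≤ (fL / C₃ ^ (p / 2)) * (C₃ ^ (p / 2) * (Q + S) ^ (p / 2)) := by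
        exact mul_le_mul hc h2 (Real.rpow_nonneg hX0 _) (div_nonneg hfL.le hC3p.le)
    _ = fL * (Q + S) ^ (p / 2) := by field_simp
    _ ≤ (Q + S) ^ (p / 2) * f := by
        rw [mul_comm]
        exact mul_le_mul_of_nonneg_left hf1 (Real.rpow_nonneg (add_nonneg hQ0 hS0) _)

lemma ptwise_up {m : ℕ} {p : ℝ} (hp : 1 ≤ p) {B fL fU : ℝ} (hB : 0 ≤ B) (hfL : 0 < fL)
    {C₂ : ℝ} (hC2a : 2 / fL ^ 2 ≤ C₂) (hC2b : 2 * (m : ℝ) * B ^ 2 / fL ^ 2 + 1 ≤ C₂)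
    {C : ℝ} (hC : C₂ ^ (p / 2) * fU ≤ C)
    (u : ℝ) (v F : Fin m → ℝ) (hF : ∀ μ, |F μ| ≤ B)
    {f : ℝ} (hf1 : fL ≤ f) (hf2 : f ≤ fU) :
    (|(u - ∑ μ, F μ * v μ) / f| ^ 2 + ∑ μ, v μ ^ 2) ^ (p / 2) * f
      ≤ C * (u ^ 2 + ∑ μ, v μ ^ 2) ^ (p / 2) := by
  have hfL2 : (0:ℝ) < fL ^ 2 := by positivity
  have hC20 : (0:ℝ) < C₂ := lt_of_lt_of_le (by positivity) hC2b
  set S := ∑ μ, v μ ^ 2 with hSdef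
  set w := ∑ μ, F μ * v μ with hwdef
  have hS0 : 0 ≤ S := hSdef ▸ Finset.sum_nonneg fun μ _ => sq_nonneg _
  have hf0 : 0 < f := lt_of_lt_of_le hfL hf1
  set Q := ((u - w) / f) ^ 2 with hQdef
  clear_value S w Q
  have hQ0 : 0 ≤ Q := hQdef ▸ sq_nonneg _
  have hw2 : w ^ 2 ≤ (m : ℝ) * B ^ 2 * S := by
    have h1 : w ^ 2 ≤ (∑ μ, F μ ^ 2) * S := by
      rw [hwdef, hSdef]; exact Finset.sum_mul_sq_le_sq_mul_sq _ _ _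
    have h2 : (∑ μ, F μ ^ 2) ≤ (m : ℝ) * B ^ 2 := by
      calc (∑ μ, F μ ^ 2) ≤ ∑ _μ : Fin m, B ^ 2 :=
            Finset.sum_le_sum fun μ _ => by
              have := hF μ; nlinarith [abs_nonneg (F μ), sq_abs (F μ)]
        _ = (m : ℝ) * B ^ 2 := by simp [Finset.sum_const, Finset.card_univ]
    nlinarith
  have hQle : Q ≤ (u - w) ^ 2 / fL ^ 2 := by
    rw [hQdef, div_pow]
    exact div_le_div_of_nonneg_left (sq_nonneg _) hfL2 (by nlinarith)
  have hkey : Q + S ≤ C₂ * (u ^ 2 + S) := by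
    have huw2 : (u - w) ^ 2 ≤ 2 * u ^ 2 + 2 * w ^ 2 := by nlinarith [sq_nonneg (u + w)]
    have h3 : Q ≤ (2 * u ^ 2 + 2 * ((m:ℝ) * B ^ 2 * S)) / fL ^ 2 := by
      refine hQle.trans ?_
      gcongr
      nlinarith
    have h4 : (2 * u ^ 2 + 2 * ((m:ℝ) * B ^ 2 * S)) / fL ^ 2
        = (2 / fL ^ 2) * u ^ 2 + (2 * (m:ℝ) * B ^ 2 / fL ^ 2) * S := by ring
    nlinarith [mul_nonneg (sq_nonneg u) (sub_nonneg.mpr hC2a),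
      mul_nonneg hS0 (sub_nonneg.mpr hC2b)]
  have hp2 : (0:ℝ) ≤ p / 2 := by linarith
  have habs : |(u - w) / f| ^ 2 = Q := by rw [sq_abs, hQdef]
  rw [habs]
  have h2 : (Q + S) ^ (p / 2) ≤ C₂ ^ (p / 2) * (u ^ 2 + S) ^ (p / 2) := by
    rw [← Real.mul_rpow hC20.le (add_nonneg (sq_nonneg u) hS0)]
    exact Real.rpow_le_rpow (add_nonneg hQ0 hS0) hkey hp2
  calc (Q + S) ^ (p / 2) * f ≤ (C₂ ^ (p / 2) * (u ^ 2 + S) ^ (p / 2)) * fU := by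
        exact mul_le_mul h2 hf2 hf0.le
          (mul_nonneg (Real.rpow_nonneg hC20.le _)
            (Real.rpow_nonneg (add_nonneg (sq_nonneg u) hS0) _))
    _ = (C₂ ^ (p / 2) * fU) * (u ^ 2 + S) ^ (p / 2) := by ring
    _ ≤ C * (u ^ 2 + S) ^ (p / 2) :=
        mul_le_mul_of_nonneg_right hC (Real.rpow_nonneg (add_nonneg (sq_nonneg u) hS0) _)

set_option maxHeartbeats 1000000 in
/-- Norm equivalence: if `a·‖κ‖_∞ < 1` and `R'` is globally bounded, then the
curvilinear energy `Q[ψ] + ‖ψ‖^p` is comparable to the usual `W^{1,p}` norm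
`∫ |∇ψ|^p + ∫ |ψ|^p` on the straight tube, with two-sided constants `0 < c ≤ C`;
hence `W₀^{1,p}(Ω₀,g) = W₀^{1,p}(Ω₀)`. -/
theorem stmt_16 {m : ℕ} (hm : 1 ≤ m) (p : ℝ) (hp : 1 < p)
    (ω : Set (E m)) (hωopen : IsOpen ω) (hωne : ω.Nonempty)
    (hωbdd : Bornology.IsBounded ω) (hωconn : IsConnected ω)
    (k : ℝ → E m) (hkmeas : Measurable k)
    (hkbdd : BddAbove (Set.range fun s => ‖k s‖))
    (R : ℝ → Matrix (Fin m) (Fin m) ℝ)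
    (hRorth : ∀ s, R s * (R s)ᵀ = 1) (hRdet : ∀ s, (R s).det = 1)
    (hRdiff : ∀ i j, Differentiable ℝ fun s => R s i j)
    (hRdbd : ∀ i j, BddAbove (Set.range fun s => |Rd R s i j|))
    (a : ℝ) (ha : a = sSup ((fun t : E m => ‖t‖) '' ω))
    (K : ℝ) (hK : K = sSup (Set.range fun s => ‖k s‖))
    (hsmall : a * K < 1) :
    ∃ c C : ℝ, 0 < c ∧ c ≤ C ∧
      ∀ ψ : ℝ × E m → ℝ, ContDiff ℝ (⊤ : ℕ∞) ψ → HasCompactSupport ψ →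
        tsupport ψ ⊆ tube ω →
        (c * ((∫ x in tube ω, gradP p ψ x) + ∫ x in tube ω, |ψ x| ^ p)
            ≤ Qf p (fJac R k) (Fvec R) (tube ω) ψ + Nf p (fJac R k) (tube ω) ψ) ∧
        (Qf p (fJac R k) (Fvec R) (tube ω) ψ + Nf p (fJac R k) (tube ω) ψ
            ≤ C * ((∫ x in tube ω, gradP p ψ x) + ∫ x in tube ω, |ψ x| ^ p)) := by
  -- basic bounds on a, K
  obtain ⟨r, hr⟩ := isBounded_iff_forall_norm_le.mp hωbdd
  have hBdd : BddAbove ((fun t : E m => ‖t‖) '' ω) :=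
    ⟨r, fun y hy => by obtain ⟨t, ht, rfl⟩ := hy; exact hr t ht⟩
  have hnorm_le_a : ∀ t ∈ ω, ‖t‖ ≤ a := fun t ht => ha ▸ le_csSup hBdd ⟨t, ht, rfl⟩
  obtain ⟨t₀, ht₀⟩ := hωne
  have ha0 : 0 ≤ a := le_trans (norm_nonneg t₀) (hnorm_le_a t₀ ht₀)
  have hk_le_K : ∀ s, ‖k s‖ ≤ K := fun s => hK ▸ le_csSup hkbdd ⟨s, rfl⟩
  have hK0 : 0 ≤ K := le_trans (norm_nonneg _) (hk_le_K 0)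
  set fL : ℝ := 1 - a * K with hfLdef
  set fU : ℝ := 1 + a * K with hfUdef
  have hfL : 0 < fL := by rw [hfLdef]; linarith
  have hfLU : fL ≤ fU := by rw [hfLdef, hfUdef]; nlinarith
  clear_value fL fU
  -- orthogonality facts
  have hRTR : ∀ s, (R s)ᵀ * R s = 1 := fun s => mul_eq_one_comm.mp (hRorth s)
  have hR1 : ∀ s i j, |R s i j| ≤ 1 := by
    intro s i j
    have hdiag : ∑ l, R s i l * R s i l = 1 := by
      have h := congrArg (fun M => M i i) (hRorth s)
      simpa [Matrix.mul_apply, Matrix.transpose_apply, Matrix.one_apply] using h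
    have hsq : R s i j * R s i j ≤ 1 := by
      rw [← hdiag]
      exact Finset.single_le_sum (fun l _ => mul_self_nonneg (R s i l)) (Finset.mem_univ j)
    nlinarith [abs_nonneg (R s i j), abs_mul_abs_self (R s i j)]
  -- bounds on the Jacobian f
  have hfsum : ∀ s, ∀ t ∈ ω, |∑ α, ∑ β, t α * R s α β * k s β| ≤ a * K := by
    intro s t ht
    have h5 : (∑ α, ∑ β, t α * R s α β * k s β)
        = ∑ α, t α * (∑ β, R s α β * k s β) := by
      refine Finset.sum_congr rfl fun α _ => ?_
      rw [Finset.mul_sum]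
      exact Finset.sum_congr rfl fun β _ => by ring
    have h1 : (∑ α, t α * (∑ β, R s α β * k s β)) ^ 2
        ≤ (∑ α, t α ^ 2) * (∑ α, (∑ β, R s α β * k s β) ^ 2) :=
      Finset.sum_mul_sq_le_sq_mul_sq _ _ _
    have h2 : ∑ α, (∑ β, R s α β * k s β) ^ 2 = ∑ β, k s β ^ 2 :=
      orth_sum_sq (hRTR s) _
    have h3 : (∑ α, t α ^ 2) = ‖t‖ ^ 2 := (euclid_sq_norm t).symm
    have h4 : (∑ β, k s β ^ 2) = ‖k s‖ ^ 2 := (euclid_sq_norm (k s)).symm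
    rw [h5]
    have hta := hnorm_le_a t ht
    have hkK := hk_le_K s
    have hXsq : (∑ α, t α * (∑ β, R s α β * k s β)) ^ 2 ≤ (a * K) ^ 2 := by
      rw [h2, h3, h4] at h1
      have h7 : ‖t‖ * ‖k s‖ ≤ a * K := mul_le_mul hta hkK (norm_nonneg (k s)) ha0
      have h6 : ‖t‖ ^ 2 * ‖k s‖ ^ 2 ≤ (a * K) ^ 2 := by
        nlinarith [h7, mul_nonneg (norm_nonneg t) (norm_nonneg (k s))]
      exact h1.trans h6
    nlinarith [abs_nonneg (∑ α, t α * (∑ β, R s α β * k s β)),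
      sq_abs (∑ α, t α * (∑ β, R s α β * k s β))]
  have hfLB : ∀ s, ∀ t ∈ ω, fL ≤ fJac R k s t ∧ fJac R k s t ≤ fU := by
    intro s t ht
    obtain ⟨h1, h2⟩ := abs_le.mp (hfsum s t ht)
    unfold fJac
    constructor
    · rw [hfLdef]; linarith
    · rw [hfUdef]; linarith
  -- bound on F
  set D : Fin m → Fin m → ℝ := fun α β => sSup (Set.range fun s => |Rd R s α β|) with hDdef
  have hDbd : ∀ s α β, |Rd R s α β| ≤ D α β := fun s α β => le_csSup (hRdbd α β) ⟨s, rfl⟩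
  have hD0 : ∀ α β, 0 ≤ D α β := fun α β => le_trans (abs_nonneg _) (hDbd 0 α β)
  set B : ℝ := a * ∑ α, ∑ β, D α β with hBdef
  have hB0 : 0 ≤ B := by
    rw [hBdef]
    exact mul_nonneg ha0 (Finset.sum_nonneg fun α _ => Finset.sum_nonneg fun β _ => hD0 α β)
  have hFbd : ∀ s, ∀ t ∈ ω, ∀ μ, |Fvec R s t μ| ≤ B := by
    intro s t ht μ
    unfold Fvec
    calc |∑ α, ∑ β, t α * Rd R s α β * R s μ β|
        ≤ ∑ α, ∑ β, |t α * Rd R s α β * R s μ β| :=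
          (Finset.abs_sum_le_sum_abs _ _).trans
            (Finset.sum_le_sum fun α _ => Finset.abs_sum_le_sum_abs _ _)
      _ ≤ ∑ α, ∑ β, a * D α β := by
          refine Finset.sum_le_sum fun α _ => Finset.sum_le_sum fun β _ => ?_
          rw [abs_mul, abs_mul]
          have h1 : |t α| * |Rd R s α β| ≤ a * D α β :=
            mul_le_mul ((coord_abs_le_norm t α).trans (hnorm_le_a t ht)) (hDbd s α β)
              (abs_nonneg _) ha0
          calc |t α| * |Rd R s α β| * |R s μ β| ≤ (a * D α β) * 1 :=
                mul_le_mul h1 (hR1 s μ β) (abs_nonneg _)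
                  (mul_nonneg ha0 (hD0 α β))
            _ = a * D α β := mul_one _
      _ = B := by rw [hBdef, Finset.mul_sum]; exact Finset.sum_congr rfl fun α _ =>
            (Finset.mul_sum _ _ _).symm
  clear_value D B
  -- constants
  set C₃ : ℝ := max (2 * fU ^ 2) (2 * (m : ℝ) * B ^ 2 + 1) with hC₃def
  set C₂ : ℝ := max (2 / fL ^ 2) (2 * (m : ℝ) * B ^ 2 / fL ^ 2 + 1) with hC₂def
  have hC₃pos : 0 < C₃ := lt_of_lt_of_le (by positivity) (le_max_right _ _)
  have hC₂pos : 0 < C₂ := lt_of_lt_of_le (by positivity) (le_max_right _ _)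
  have hC₃p : 0 < C₃ ^ (p / 2) := Real.rpow_pos_of_pos hC₃pos _
  set c : ℝ := min (fL / C₃ ^ (p / 2)) fL with hcdef
  set C : ℝ := max (C₂ ^ (p / 2) * fU) fU with hCdef
  have hcpos : 0 < c := lt_min (div_pos hfL hC₃p) hfL
  have hfUC : fU ≤ C := le_max_right _ _
  have hcC : c ≤ C := (min_le_right _ _).trans (hfLU.trans hfUC)
  have hcfL : c ≤ fL := min_le_right _ _
  have hcC₃ : c ≤ fL / C₃ ^ (p / 2) := min_le_left _ _
  have hC₂C : C₂ ^ (p / 2) * fU ≤ C := le_max_left _ _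
  have hC3a : 2 * fU ^ 2 ≤ C₃ := le_max_left _ _
  have hC3b : 2 * (m : ℝ) * B ^ 2 + 1 ≤ C₃ := le_max_right _ _
  have hC2a : 2 / fL ^ 2 ≤ C₂ := le_max_left _ _
  have hC2b : 2 * (m : ℝ) * B ^ 2 / fL ^ 2 + 1 ≤ C₂ := le_max_right _ _
  clear_value C₃ C₂ c C
  refine ⟨c, C, hcpos, hcC, ?_⟩
  intro ψ hψ hψcs hψsupp
  -- continuity and bounds for derivatives of ψ
  have hfd : Continuous (fderiv ℝ ψ) := hψ.continuous_fderiv (by simp)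
  have hdScont : Continuous (dS ψ) := by unfold dS; exact hfd.clm_apply continuous_const
  have hdTcont : ∀ μ, Continuous fun x => dT ψ x μ := by
    intro μ; unfold dT; exact hfd.clm_apply continuous_const
  obtain ⟨M, hM⟩ := (hψcs.fderiv ℝ).exists_bound_of_continuous hfd
  have hM0 : 0 ≤ M := le_trans (norm_nonneg _) (hM 0)
  have hnorm10 : ‖((1 : ℝ), (0 : E m))‖ = 1 := by simp [Prod.norm_def]
  have hnorm01 : ∀ μ : Fin m, ‖((0 : ℝ), EuclideanSpace.single μ (1:ℝ))‖ = 1 := by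
    intro μ; simp [Prod.norm_def, EuclideanSpace.norm_single]
  have hdSb : ∀ x, |dS ψ x| ≤ M := by
    intro x
    unfold dS
    calc |fderiv ℝ ψ x (1, 0)| = ‖fderiv ℝ ψ x (1, 0)‖ := (Real.norm_eq_abs _).symm
      _ ≤ ‖fderiv ℝ ψ x‖ * ‖((1 : ℝ), (0 : E m))‖ := (fderiv ℝ ψ x).le_opNorm _
      _ = ‖fderiv ℝ ψ x‖ := by rw [hnorm10, mul_one]
      _ ≤ M := hM x
  have hdTb : ∀ x μ, |dT ψ x μ| ≤ M := by
    intro x μ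
    unfold dT
    calc |fderiv ℝ ψ x (0, EuclideanSpace.single μ 1)|
        = ‖fderiv ℝ ψ x (0, EuclideanSpace.single μ 1)‖ := (Real.norm_eq_abs _).symm
      _ ≤ ‖fderiv ℝ ψ x‖ * ‖((0 : ℝ), EuclideanSpace.single μ (1:ℝ))‖ :=
          (fderiv ℝ ψ x).le_opNorm _
      _ = ‖fderiv ℝ ψ x‖ := by rw [hnorm01, mul_one]
      _ ≤ M := hM x
  obtain ⟨Mψ, hMψ⟩ := hψcs.exists_bound_of_continuous hψ.continuous
  have hMψ' : ∀ x, |ψ x| ≤ Mψ := fun x => by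
    simpa [Real.norm_eq_abs] using hMψ x
  -- vanishing of derivatives off tsupport
  have hdS0 : ∀ x ∉ tsupport ψ, dS ψ x = 0 := by
    intro x hx
    unfold dS
    rw [fderiv_of_notMem_tsupport _ hx]
    simp
  have hdT0 : ∀ x ∉ tsupport ψ, ∀ μ, dT ψ x μ = 0 := by
    intro x hx μ
    unfold dT
    rw [fderiv_of_notMem_tsupport _ hx]
    simp
  -- measurability facts
  have hteval : ∀ α : Fin m, Continuous fun x : ℝ × E m => x.2 α := fun α =>
    (EuclideanSpace.proj α).continuous.comp continuous_snd
  have hkev : ∀ β : Fin m, Measurable fun s : ℝ => k s β := fun β =>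
    ((EuclideanSpace.proj β).continuous.measurable).comp hkmeas
  have hRcont : ∀ i j, Continuous fun s => R s i j := fun i j => (hRdiff i j).continuous
  have hRdmeas : ∀ i j, Measurable fun s => Rd R s i j := by
    intro i j; unfold Rd; exact measurable_deriv _
  have hfJmeas : Measurable fun x : ℝ × E m => fJac R k x.1 x.2 := by
    unfold fJac
    refine Measurable.sub measurable_const ?_
    refine Finset.measurable_sum _ fun α _ => Finset.measurable_sum _ fun β _ => ?_
    exact (((hteval α).measurable).mul
      (((hRcont α β).comp continuous_fst).measurable)).mul ((hkev β).comp measurable_fst)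
  have hFmeas : ∀ μ, Measurable fun x : ℝ × E m => Fvec R x.1 x.2 μ := by
    intro μ
    unfold Fvec
    refine Finset.measurable_sum _ fun α _ => Finset.measurable_sum _ fun β _ => ?_
    exact (((hteval α).measurable).mul
      ((hRdmeas α β).comp measurable_fst)).mul (((hRcont μ β).comp continuous_fst).measurable)
  have hMeasTube : MeasurableSet (tube ω) := by
    unfold tube
    exact (isOpen_univ.prod hωopen).measurableSet
  have hp2ne : p / 2 ≠ 0 := by positivity
  have hp20 : (0:ℝ) ≤ p / 2 := by linarith
  -- the integrand functions
  set QIfun : ℝ × E m → ℝ := fun x =>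
    (|(dS ψ x - ∑ μ, Fvec R x.1 x.2 μ * dT ψ x μ) / fJac R k x.1 x.2| ^ 2
      + ∑ μ, dT ψ x μ ^ 2) ^ (p / 2) * fJac R k x.1 x.2 with hQIfun
  set NIfun : ℝ × E m → ℝ := fun x => |ψ x| ^ p * fJac R k x.1 x.2 with hNIfun
  have hQfeq : Qf p (fJac R k) (Fvec R) (tube ω) ψ = ∫ x in tube ω, QIfun x := rfl
  have hNfeq : Nf p (fJac R k) (tube ω) ψ = ∫ x in tube ω, NIfun x := rfl
  clear_value QIfun NIfun
  -- integrability of gradP and |ψ|^p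
  have hgradcont : Continuous (gradP p ψ) := by
    unfold gradP
    exact ((hdScont.pow 2).add
      (continuous_finset_sum _ fun μ _ => (hdTcont μ).pow 2)).rpow_const
      fun x => Or.inr hp20
  have hgradcs : HasCompactSupport (gradP p ψ) := by
    refine HasCompactSupport.intro hψcs fun x hx => ?_
    unfold gradP
    simp [hdS0 x hx, hdT0 x hx, Real.zero_rpow hp2ne]
  have hIntA : IntegrableOn (gradP p ψ) (tube ω) :=
    (hgradcont.integrable_of_hasCompactSupport hgradcs).integrableOn
  have hpsicont : Continuous fun x : ℝ × E m => |ψ x| ^ p :=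
    (hψ.continuous.abs).rpow_const fun x => Or.inr (by linarith)
  have hpsics : HasCompactSupport fun x : ℝ × E m => |ψ x| ^ p := by
    refine HasCompactSupport.intro hψcs fun x hx => ?_
    rw [image_eq_zero_of_notMem_tsupport hx]
    simp [Real.zero_rpow (show p ≠ 0 by linarith)]
  have hIntN₀ : IntegrableOn (fun x : ℝ × E m => |ψ x| ^ p) (tube ω) :=
    (hpsicont.integrable_of_hasCompactSupport hpsics).integrableOn
  -- integrability of QIfun
  have hQImeas : Measurable QIfun := by
    simp only [hQIfun]
    refine Measurable.mul ?_ hfJmeas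
    refine Measurable.pow ?_ measurable_const
    refine Measurable.add ?_
      (Finset.measurable_sum _ fun μ _ => ((hdTcont μ).measurable).pow measurable_const)
    refine Measurable.pow ?_ measurable_const
    refine Measurable.abs ?_
    exact ((hdScont.measurable).sub
      (Finset.measurable_sum _ fun μ _ => (hFmeas μ).mul (hdTcont μ).measurable)).div hfJmeas
  have hQIsupp : Function.support QIfun ⊆ tsupport ψ := by
    rw [Function.support_subset_iff']
    intro x hx
    simp only [hQIfun]
    simp [hdS0 x hx, hdT0 x hx, Real.zero_rpow hp2ne]
  have hQIbdd : ∀ᵐ x ∂(volume.restrict (tube ω)),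
      |QIfun x| ≤ ((M * (1 + (m:ℝ) * B) / fL) ^ 2 + (m:ℝ) * M ^ 2) ^ (p / 2) * fU := by
    filter_upwards [ae_restrict_mem hMeasTube] with x hx
    have hxω : x.2 ∈ ω := hx.2
    obtain ⟨hf1, hf2⟩ := hfLB x.1 x.2 hxω
    have hfpos : 0 < fJac R k x.1 x.2 := lt_of_lt_of_le hfL hf1
    have hnum : |dS ψ x - ∑ μ, Fvec R x.1 x.2 μ * dT ψ x μ| ≤ M * (1 + (m:ℝ) * B) := by
      calc |dS ψ x - ∑ μ, Fvec R x.1 x.2 μ * dT ψ x μ|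
          ≤ |dS ψ x| + |∑ μ, Fvec R x.1 x.2 μ * dT ψ x μ| := abs_sub _ _
        _ ≤ M + ∑ μ : Fin m, B * M := by
            refine add_le_add (hdSb x) ((Finset.abs_sum_le_sum_abs _ _).trans
              (Finset.sum_le_sum fun μ _ => ?_))
            rw [abs_mul]
            exact mul_le_mul (hFbd x.1 x.2 hxω μ) (hdTb x μ) (abs_nonneg _) hB0
        _ = M * (1 + (m:ℝ) * B) := by
            simp [Finset.sum_const, Finset.card_univ]; ring
    have hnum0 : (0:ℝ) ≤ M * (1 + (m:ℝ) * B) :=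
      mul_nonneg hM0 (add_nonneg zero_le_one (mul_nonneg (Nat.cast_nonneg m) hB0))
    have hdiv : |(dS ψ x - ∑ μ, Fvec R x.1 x.2 μ * dT ψ x μ) / fJac R k x.1 x.2|
        ≤ M * (1 + (m:ℝ) * B) / fL := by
      rw [abs_div, abs_of_pos hfpos]
      exact div_le_div₀ hnum0 hnum hfL hf1
    have hbase : |(dS ψ x - ∑ μ, Fvec R x.1 x.2 μ * dT ψ x μ) / fJac R k x.1 x.2| ^ 2
        + ∑ μ, dT ψ x μ ^ 2 ≤ (M * (1 + (m:ℝ) * B) / fL) ^ 2 + (m:ℝ) * M ^ 2 := by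
      refine add_le_add (pow_le_pow_left₀ (abs_nonneg _) hdiv 2) ?_
      calc ∑ μ, dT ψ x μ ^ 2 ≤ ∑ _μ : Fin m, M ^ 2 := by
            refine Finset.sum_le_sum fun μ _ => ?_
            rw [← sq_abs]
            exact pow_le_pow_left₀ (abs_nonneg _) (hdTb x μ) 2
        _ = (m:ℝ) * M ^ 2 := by simp [Finset.sum_const, Finset.card_univ]
    have hbase0 : (0:ℝ) ≤ |(dS ψ x - ∑ μ, Fvec R x.1 x.2 μ * dT ψ x μ) / fJac R k x.1 x.2| ^ 2
        + ∑ μ, dT ψ x μ ^ 2 :=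
      add_nonneg (by positivity) (Finset.sum_nonneg fun μ _ => sq_nonneg _)
    have h1 : (|(dS ψ x - ∑ μ, Fvec R x.1 x.2 μ * dT ψ x μ) / fJac R k x.1 x.2| ^ 2
        + ∑ μ, dT ψ x μ ^ 2) ^ (p / 2)
        ≤ ((M * (1 + (m:ℝ) * B) / fL) ^ 2 + (m:ℝ) * M ^ 2) ^ (p / 2) :=
      Real.rpow_le_rpow hbase0 hbase hp20
    simp only [hQIfun]
    rw [abs_of_nonneg (mul_nonneg (Real.rpow_nonneg hbase0 _) hfpos.le)]
    exact mul_le_mul h1 hf2 hfpos.le (Real.rpow_nonneg (by positivity) _)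
  have hIntQI : IntegrableOn QIfun (tube ω) :=
    integrableOn_of_bdd_cs hMeasTube hQImeas.aestronglyMeasurable hψcs hQIsupp hQIbdd
  -- integrability of NIfun
  have hNImeas : Measurable NIfun := by
    simp only [hNIfun]
    exact (hpsicont.measurable).mul hfJmeas
  have hNIsupp : Function.support NIfun ⊆ tsupport ψ := by
    rw [Function.support_subset_iff']
    intro x hx
    simp only [hNIfun]
    rw [image_eq_zero_of_notMem_tsupport hx]
    simp [Real.zero_rpow (show p ≠ 0 by linarith)]
  have hMψ0 : 0 ≤ Mψ := le_trans (abs_nonneg _) (hMψ' 0)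
  have hNIbdd : ∀ᵐ x ∂(volume.restrict (tube ω)), |NIfun x| ≤ Mψ ^ p * fU := by
    filter_upwards [ae_restrict_mem hMeasTube] with x hx
    obtain ⟨hf1, hf2⟩ := hfLB x.1 x.2 hx.2
    have hfpos : 0 < fJac R k x.1 x.2 := lt_of_lt_of_le hfL hf1
    have h1 : |ψ x| ^ p ≤ Mψ ^ p := Real.rpow_le_rpow (abs_nonneg _) (hMψ' x) (by linarith)
    simp only [hNIfun]
    rw [abs_of_nonneg (mul_nonneg (Real.rpow_nonneg (abs_nonneg _) _) hfpos.le)]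
    exact mul_le_mul h1 hf2 hfpos.le (Real.rpow_nonneg hMψ0 _)
  have hIntNI : IntegrableOn NIfun (tube ω) :=
    integrableOn_of_bdd_cs hMeasTube hNImeas.aestronglyMeasurable hψcs hNIsupp hNIbdd
  -- pointwise comparisons
  have hptQlow : ∀ x ∈ tube ω, c * gradP p ψ x ≤ QIfun x := by
    intro x hx
    obtain ⟨hf1, hf2⟩ := hfLB x.1 x.2 hx.2
    simp only [hQIfun]
    unfold gradP
    exact ptwise_low hp.le hB0 hfL hC3a hC3b
      hcC₃ hcpos.le (dS ψ x) (fun μ => dT ψ x μ)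
      (fun μ => Fvec R x.1 x.2 μ) (fun μ => hFbd x.1 x.2 hx.2 μ) hf1 hf2
  have hptQup : ∀ x ∈ tube ω, QIfun x ≤ C * gradP p ψ x := by
    intro x hx
    obtain ⟨hf1, hf2⟩ := hfLB x.1 x.2 hx.2
    simp only [hQIfun]
    unfold gradP
    exact ptwise_up hp.le hB0 hfL hC2a hC2b
      hC₂C (dS ψ x) (fun μ => dT ψ x μ)
      (fun μ => Fvec R x.1 x.2 μ) (fun μ => hFbd x.1 x.2 hx.2 μ) hf1 hf2
  have hptNlow : ∀ x ∈ tube ω, c * |ψ x| ^ p ≤ NIfun x := by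
    intro x hx
    obtain ⟨hf1, hf2⟩ := hfLB x.1 x.2 hx.2
    have hy : 0 ≤ |ψ x| ^ p := Real.rpow_nonneg (abs_nonneg _) _
    simp only [hNIfun]
    calc c * |ψ x| ^ p ≤ fL * |ψ x| ^ p :=
          mul_le_mul_of_nonneg_right hcfL hy
      _ ≤ |ψ x| ^ p * fJac R k x.1 x.2 := by
          rw [mul_comm]; exact mul_le_mul_of_nonneg_left hf1 hy
  have hptNup : ∀ x ∈ tube ω, NIfun x ≤ C * |ψ x| ^ p := by
    intro x hx
    obtain ⟨hf1, hf2⟩ := hfLB x.1 x.2 hx.2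
    have hy : 0 ≤ |ψ x| ^ p := Real.rpow_nonneg (abs_nonneg _) _
    simp only [hNIfun]
    calc |ψ x| ^ p * fJac R k x.1 x.2 ≤ |ψ x| ^ p * fU :=
          mul_le_mul_of_nonneg_left hf2 hy
      _ ≤ C * |ψ x| ^ p := by
          rw [mul_comm]; exact mul_le_mul_of_nonneg_right hfUC hy
  constructor
  · -- lower bound
    rw [hQfeq, hNfeq, mul_add, ← integral_const_mul, ← integral_const_mul]
    exact add_le_add
      (setIntegral_mono_on (hIntA.const_mul c) hIntQI hMeasTube hptQlow)
      (setIntegral_mono_on (hIntN₀.const_mul c) hIntNI hMeasTube hptNlow)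
  · -- upper bound
    rw [hQfeq, hNfeq, mul_add, ← integral_const_mul, ← integral_const_mul]
    exact add_le_add
      (setIntegral_mono_on hIntQI (hIntA.const_mul C) hMeasTube hptQup)
      (setIntegral_mono_on hIntNI (hIntN₀.const_mul C) hMeasTube hptNup)
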